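/- Let g : ℝ → ℝ be continuous with g(r) > 0 for all r, and let n ≥ 1 be a natural number. If x : [s, T) → ℝ is differentiable, x(s) < 0, and ẋ(t) ≤ −g(t) x(t)^{2n} for all t, then for all t in [s, T), x(t)^{−(2n−1)} ≥ x(s)^{−(2n−1)} + (2n−1)∫_s^t g(r) dr, hence x(t) ≤ (x(s)^{−(2n−1)} + (2n−1)∫_s^t g(r) dr)^{−1/(2n−1)} whenever the bracketed quantity is negative. -/

import Mathlib

open Set intervalIntegral

theorem stmt2 (g : ℝ → ℝ) (hg : Continuous g) (hgpos : ∀ r, 0 < g r)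
    (n : ℕ) (hn : 1 ≤ n) (s T : ℝ) (x : ℝ → ℝ)
    (hx : ∀ t ∈ Set.Ico s T, HasDerivAt x (deriv x t) t)
    (hxs : x s < 0)
    (hineq : ∀ t ∈ Set.Ico s T, deriv x t ≤ -g t * x t ^ (2 * n)) :
    ∀ t ∈ Set.Ico s T,
      x s ^ (-(2 * (n : ℤ) - 1)) + (2 * (n : ℝ) - 1) * ∫ r in s..t, g r
        ≤ x t ^ (-(2 * (n : ℤ) - 1)) ∧
      (x s ^ (-(2 * (n : ℤ) - 1)) + (2 * (n : ℝ) - 1) * ∫ r in s..t, g r < 0 →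
        x t ≤ -(-(x s ^ (-(2 * (n : ℤ) - 1)) + (2 * (n : ℝ) - 1) * ∫ r in s..t, g r))
          ^ (-(1 : ℝ) / (2 * n - 1))) := by
  intro t ht
  have hsT : s < T := lt_of_le_of_lt ht.1 ht.2
  have hsmem : s ∈ Set.Ico s T := ⟨le_refl s, hsT⟩
  set m : ℤ := -(2 * (n : ℤ) - 1) with hm
  have hc1 : (1 : ℝ) ≤ 2 * (n : ℝ) - 1 := by
    have : (1 : ℝ) ≤ (n : ℝ) := by exact_mod_cast hn
    linarith
  have hc0 : (0 : ℝ) < 2 * (n : ℝ) - 1 := by linarith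
  -- x is continuous on Ico s T
  have hxc : ContinuousOn x (Set.Ico s T) := fun u hu =>
    (hx u hu).continuousAt.continuousWithinAt
  -- x is antitone on Ico s T
  have hanti : AntitoneOn x (Set.Ico s T) := by
    apply antitoneOn_of_deriv_nonpos (convex_Ico s T) hxc
    · intro u hu
      rw [interior_Ico] at hu
      exact ((hx u (Set.Ioo_subset_Ico_self hu)).differentiableAt).differentiableWithinAt
    · intro u hu
      rw [interior_Ico] at hu
      have hu' := Set.Ioo_subset_Ico_self hu
      have h1 := hineq u hu'
      have h2 : (0:ℝ) ≤ x u ^ (2 * n) := (even_two_mul n).pow_nonneg _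
      nlinarith [hgpos u]
  -- x is negative on Ico s T
  have hneg : ∀ u ∈ Set.Ico s T, x u < 0 := fun u hu =>
    lt_of_le_of_lt (hanti hsmem hu hu.1) hxs
  -- the auxiliary function
  set F : ℝ → ℝ := fun u => x u ^ m - (2 * (n : ℝ) - 1) * ∫ r in s..u, g r with hF
  have hFderiv : ∀ u ∈ Set.Ico s T,
      HasDerivAt F ((m : ℝ) * x u ^ (m - 1) * deriv x u - (2 * (n : ℝ) - 1) * g u) u := by
    intro u hu
    have h1 : HasDerivAt (fun v => x v ^ m) ((m : ℝ) * x u ^ (m - 1) * deriv x u) u := by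
      have := (hasDerivAt_zpow m (x u) (Or.inl (hneg u hu).ne)).comp u (hx u hu)
      simpa [mul_assoc, Function.comp_def] using this
    have h2 : HasDerivAt (fun v => ∫ r in s..v, g r) (g u) u :=
      intervalIntegral.integral_hasDerivAt_right (hg.intervalIntegrable s u)
        (hg.stronglyMeasurableAtFilter _ _) hg.continuousAt
    exact h1.sub (h2.const_mul _)
  have hFd' : ∀ u ∈ Set.Ico s T,
      0 ≤ (m : ℝ) * x u ^ (m - 1) * deriv x u - (2 * (n : ℝ) - 1) * g u := by
    intro u hu
    have hxu : x u < 0 := hneg u hu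
    have hxune : x u ≠ 0 := hxu.ne
    have hm1 : m - 1 = -(2 * (n : ℤ)) := by omega
    have hpow : x u ^ (m - 1) = (x u ^ (2 * n))⁻¹ := by
      rw [hm1, zpow_neg]
      norm_cast
    have hppos : (0:ℝ) < x u ^ (2*n) := (even_two_mul n).pow_pos hxune
    have hinv : (0:ℝ) < (x u ^ (2*n))⁻¹ := by positivity
    have hmr : (m : ℝ) = -(2 * (n:ℝ) - 1) := by push_cast [hm]; ring
    rw [hpow, hmr]
    have h1 := hineq u hu
    -- -(c) * inv * x' ≥ -(c) * inv * (-g * pow) = c * g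
    have key : -(2 * (n:ℝ) - 1) * (x u ^ (2*n))⁻¹ * deriv x u ≥
        -(2 * (n:ℝ) - 1) * (x u ^ (2*n))⁻¹ * (-g u * x u ^ (2*n)) := by
      apply mul_le_mul_of_nonpos_left h1
      nlinarith
    have hcancel : -(2 * (n:ℝ) - 1) * (x u ^ (2*n))⁻¹ * (-g u * x u ^ (2*n))
        = (2 * (n:ℝ) - 1) * g u := by
      field_simp
    rw [hcancel] at key
    linarith
  have hFmono : MonotoneOn F (Set.Ico s T) := by
    apply monotoneOn_of_deriv_nonneg (convex_Ico s T)
    · intro u hu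
      exact (hFderiv u hu).continuousAt.continuousWithinAt
    · intro u hu
      rw [interior_Ico] at hu
      exact (hFderiv u (Set.Ioo_subset_Ico_self hu)).differentiableAt.differentiableWithinAt
    · intro u hu
      rw [interior_Ico] at hu
      have hu' := Set.Ioo_subset_Ico_self hu
      rw [(hFderiv u hu').deriv]
      exact hFd' u hu'
  have hFle : F s ≤ F t := hFmono hsmem ht ht.1
  have hFs : F s = x s ^ m := by simp [hF]
  have main : x s ^ m + (2 * (n : ℝ) - 1) * ∫ r in s..t, g r ≤ x t ^ m := by
    have : x s ^ m ≤ x t ^ m - (2 * (n : ℝ) - 1) * ∫ r in s..t, g r := hFs ▸ hFle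
    linarith
  refine ⟨main, fun hA => ?_⟩
  set A : ℝ := x s ^ m + (2 * (n : ℝ) - 1) * ∫ r in s..t, g r with hAdef
  have hxt : x t < 0 := hneg t ht
  -- x t ^ m = -(-x t)^m, m odd negative
  have hodd : Odd (2 * n - 1) := by
    refine ⟨n - 1, by omega⟩
  have hBpos : (0:ℝ) < -A := by linarith
  -- u := -x t > 0
  have hu : (0:ℝ) < -x t := by linarith
  have hxtm : x t ^ m = -((-x t) ^ m) := by
    rw [hm]
    have h2 : (-(2 * (n:ℤ) - 1)) = -((2*n-1 : ℕ) : ℤ) := by push_cast; omega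
    rw [h2, zpow_neg, zpow_neg]
    push_cast
    rw [zpow_natCast, zpow_natCast, hodd.neg_pow, inv_neg, neg_neg]
  have hum : (-x t) ^ m = ((-x t) ^ (2*n-1))⁻¹ := by
    have h2 : m = -((2*n-1 : ℕ) : ℤ) := by rw [hm]; push_cast; omega
    rw [h2, zpow_neg, zpow_natCast]
  -- From A ≤ x t ^ m : (-x t)^m ≤ -A
  have h3 : ((-x t) ^ (2*n-1))⁻¹ ≤ -A := by
    rw [← hum]
    linarith [hxtm, main]
  have hpowpos : (0:ℝ) < (-x t) ^ (2*n-1) := by positivity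
  have h4 : (-A)⁻¹ ≤ (-x t) ^ (2*n-1) := by
    rw [← inv_inv ((-x t) ^ (2*n-1))]
    exact inv_anti₀ (by positivity) h3
  -- raise to power 1/(2n-1)
  have hcnat : ((2*n-1 : ℕ) : ℝ) = 2 * (n:ℝ) - 1 := by
    rw [Nat.cast_sub (by omega : 1 ≤ 2*n)]; push_cast; ring
  have h5 : ((-A)⁻¹) ^ ((1:ℝ)/(2*(n:ℝ)-1)) ≤ ((-x t) ^ (2*n-1) : ℝ) ^ ((1:ℝ)/(2*(n:ℝ)-1)) :=
    Real.rpow_le_rpow (by positivity) h4 (by positivity)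
  have h6 : ((-x t) ^ (2*n-1) : ℝ) ^ ((1:ℝ)/(2*(n:ℝ)-1)) = -x t := by
    rw [← Real.rpow_natCast (-x t) (2*n-1), ← Real.rpow_mul hu.le, hcnat]
    rw [mul_one_div, div_self hc0.ne', Real.rpow_one]
  have h7 : ((-A)⁻¹) ^ ((1:ℝ)/(2*(n:ℝ)-1)) = (-A) ^ (-(1:ℝ)/(2*(n:ℝ)-1)) := by
    have he : (-(1:ℝ))/(2*(n:ℝ)-1) = -((1:ℝ)/(2*(n:ℝ)-1)) := by ring
    rw [Real.inv_rpow hBpos.le, ← Real.rpow_neg hBpos.le, he]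
  rw [h6, h7] at h5
  linarith
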